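/- For any pmf P_{X,Y,Z,U,V} on finite alphabets satisfying the Markov chains X−(U,V)−Y and (X,Y,U)−V−Z, one has I(X;U,V) ≥ I(X;Y,Z) and I(X;V) ≥ I(X;Z). Consequently, the choice (U,V)=(Y,Z) simultaneously minimizes both communication-rate expressions over D, yielding minimum rates R1 = I(X;Y,Z) and R2 = I(X;Z). -/

import Mathlib

open scoped BigOperators
open Finset Filter

noncomputable section

/-- `p` is a probability mass function on the finite type `α`. -/
def IsPmf {α : Type} [Fintype α] (p : α → ℝ) : Prop :=
  (∀ a, 0 ≤ p a) ∧ ∑ a, p a = 1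

/-- Total variation distance `‖p − q‖_TV = (1/2) Σ |p − q|`. -/
def TV {α : Type} [Fintype α] (p q : α → ℝ) : ℝ :=
  (∑ a, |p a - q a|) / 2

/-- The distribution (law) of the random variable `f` when the underlying
probability mass function is `p`. -/
def lawOf {Ω α : Type} [Fintype Ω] [DecidableEq α]
    (p : Ω → ℝ) (f : Ω → α) : α → ℝ :=
  fun a => ∑ ω, if f ω = a then p ω else 0

/-- Shannon entropy (base 2) of a pmf on a finite type. -/
def H2 {α : Type} [Fintype α] (p : α → ℝ) : ℝ :=
  -∑ a, p a * Real.logb 2 (p a)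

/-- Entropy `H(X)` of a random variable `X` under the pmf `p`. -/
def ent {Ω α : Type} [Fintype Ω] [Fintype α] [DecidableEq α]
    (p : Ω → ℝ) (X : Ω → α) : ℝ :=
  H2 (lawOf p X)

/-- Mutual information `I(X;Y)` under the pmf `p`. -/
def mi {Ω α β : Type} [Fintype Ω] [Fintype α] [Fintype β]
    [DecidableEq α] [DecidableEq β]
    (p : Ω → ℝ) (X : Ω → α) (Y : Ω → β) : ℝ :=
  ent p X + ent p Y - ent p (fun ω => (X ω, Y ω))

/-- Conditional mutual information `I(X;Y|W)` under the pmf `p`. -/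
def cmi {Ω α β γ : Type} [Fintype Ω] [Fintype α] [Fintype β] [Fintype γ]
    [DecidableEq α] [DecidableEq β] [DecidableEq γ]
    (p : Ω → ℝ) (X : Ω → α) (Y : Ω → β) (W : Ω → γ) : ℝ :=
  ent p (fun ω => (X ω, W ω)) + ent p (fun ω => (Y ω, W ω))
    - ent p (fun ω => (X ω, Y ω, W ω)) - ent p W

/-- `X` and `Y` are conditionally independent given `W` under `p`
(the Markov chain `X − W − Y`). -/
def CondIndep {Ω α β γ : Type} [Fintype Ω] [Fintype α] [Fintype β] [Fintype γ]
    [DecidableEq α] [DecidableEq β] [DecidableEq γ]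
    (p : Ω → ℝ) (X : Ω → α) (Y : Ω → β) (W : Ω → γ) : Prop :=
  ∀ x y w,
    lawOf p (fun ω => (X ω, Y ω, W ω)) (x, y, w) * lawOf p W w
      = lawOf p (fun ω => (X ω, W ω)) (x, w) * lawOf p (fun ω => (Y ω, W ω)) (y, w)

/-- `X` and `Y` are independent under `p`. -/
def IndepRV {Ω α β : Type} [Fintype Ω] [Fintype α] [Fintype β]
    [DecidableEq α] [DecidableEq β]
    (p : Ω → ℝ) (X : Ω → α) (Y : Ω → β) : Prop :=
  ∀ a b, lawOf p (fun ω => (X ω, Y ω)) (a, b) = lawOf p X a * lawOf p Y b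



section Aux

set_option linter.unusedSectionVars false

variable {Ω α β γ : Type} [Fintype Ω] [Fintype α] [Fintype β] [Fintype γ]
  [DecidableEq α] [DecidableEq β] [DecidableEq γ]

lemma lawOf_nonneg {p : Ω → ℝ} (hp : ∀ ω, 0 ≤ p ω)
    (f : Ω → α) (a : α) : 0 ≤ lawOf p f a :=
  Finset.sum_nonneg fun ω _ => by split <;> simp [hp ω]

lemma lawOf_comp_inj_apply
    (p : Ω → ℝ) (f : Ω → α) (g : α → β) (hg : Function.Injective g) (a : α) :
    lawOf p (fun ω => g (f ω)) (g a) = lawOf p f a := by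
  unfold lawOf
  exact Finset.sum_congr rfl fun ω _ => by simp [hg.eq_iff]

lemma ent_comp_inj
    (p : Ω → ℝ) (f : Ω → α) (g : α → β) (hg : Function.Injective g) :
    ent p (fun ω => g (f ω)) = ent p f := by
  unfold ent H2
  congr 1
  have h0 : ∀ b ∈ Finset.univ, b ∉ (Finset.univ : Finset α).image g →
      lawOf p (fun ω => g (f ω)) b * Real.logb 2 (lawOf p (fun ω => g (f ω)) b) = 0 := by
    intro b _ hb
    have hz : lawOf p (fun ω => g (f ω)) b = 0 := by
      refine Finset.sum_eq_zero fun ω _ => ?_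
      have : g (f ω) ≠ b := fun h => hb (Finset.mem_image.2 ⟨f ω, Finset.mem_univ _, h⟩)
      simp [this]
    simp [hz]
  rw [← Finset.sum_subset (Finset.subset_univ _) h0,
      Finset.sum_image (fun a _ a' _ h => hg h)]
  exact Finset.sum_congr rfl fun a _ => by rw [lawOf_comp_inj_apply p f g hg]

variable (p : Ω → ℝ) (X : Ω → α) (Y : Ω → β) (W : Ω → γ)

lemma law_XW (x : α) (w : γ) :
    lawOf p (fun ω => (X ω, W ω)) (x, w)
      = ∑ y, lawOf p (fun ω => (X ω, Y ω, W ω)) (x, y, w) := by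
  unfold lawOf
  rw [Finset.sum_comm]
  refine Finset.sum_congr rfl fun ω _ => ?_
  by_cases h1 : X ω = x <;> by_cases h2 : W ω = w <;>
    simp [Prod.ext_iff, h1, h2]

lemma law_YW (y : β) (w : γ) :
    lawOf p (fun ω => (Y ω, W ω)) (y, w)
      = ∑ x, lawOf p (fun ω => (X ω, Y ω, W ω)) (x, y, w) := by
  unfold lawOf
  rw [Finset.sum_comm]
  refine Finset.sum_congr rfl fun ω _ => ?_
  by_cases h1 : Y ω = y <;> by_cases h2 : W ω = w <;>
    simp [Prod.ext_iff, h1, h2]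

lemma law_W1 (w : γ) :
    lawOf p W w = ∑ x, lawOf p (fun ω => (X ω, W ω)) (x, w) := by
  unfold lawOf
  rw [Finset.sum_comm]
  refine Finset.sum_congr rfl fun ω _ => ?_
  by_cases h2 : W ω = w <;> simp [Prod.ext_iff, h2]

lemma law_W (w : γ) :
    lawOf p W w
      = ∑ x, ∑ y, lawOf p (fun ω => (X ω, Y ω, W ω)) (x, y, w) := by
  rw [law_W1 p X W w]
  exact Finset.sum_congr rfl fun x _ => law_XW p X Y W x w

end Aux

section Aux2
set_option linter.unusedSectionVars false
variable {Ω α β γ : Type} [Fintype Ω] [Fintype α] [Fintype β] [Fintype γ]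
  [DecidableEq α] [DecidableEq β] [DecidableEq γ]
variable (p : Ω → ℝ) (X : Ω → α) (Y : Ω → β) (W : Ω → γ)

lemma law_W2 (w : γ) :
    lawOf p W w = ∑ y, lawOf p (fun ω => (Y ω, W ω)) (y, w) := by
  unfold lawOf
  rw [Finset.sum_comm]
  refine Finset.sum_congr rfl fun ω _ => ?_
  by_cases h2 : W ω = w <;> simp [Prod.ext_iff, h2]

lemma ent_XW :
    ent p (fun ω => (X ω, W ω))
      = -∑ t : α × β × γ, lawOf p (fun ω => (X ω, Y ω, W ω)) t *
          Real.logb 2 (lawOf p (fun ω => (X ω, W ω)) (t.1, t.2.2)) := by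
  unfold ent H2
  congr 1
  simp only [Fintype.sum_prod_type]
  refine Finset.sum_congr rfl fun x _ => ?_
  rw [Finset.sum_comm]
  refine Finset.sum_congr rfl fun w _ => ?_
  rw [law_XW p X Y W x w, Finset.sum_mul]

lemma ent_YW :
    ent p (fun ω => (Y ω, W ω))
      = -∑ t : α × β × γ, lawOf p (fun ω => (X ω, Y ω, W ω)) t *
          Real.logb 2 (lawOf p (fun ω => (Y ω, W ω)) (t.2.1, t.2.2)) := by
  unfold ent H2
  congr 1
  simp only [Fintype.sum_prod_type]
  conv_rhs => rw [Finset.sum_comm]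
  refine Finset.sum_congr rfl fun y _ => ?_
  conv_rhs => rw [Finset.sum_comm]
  refine Finset.sum_congr rfl fun w _ => ?_
  rw [law_YW p X Y W y w, Finset.sum_mul]

lemma sum_comm3 {δ : Type} [AddCommMonoid δ] (f : α → β → γ → δ) :
    ∑ x, ∑ y, ∑ w, f x y w = ∑ w, ∑ x, ∑ y, f x y w := by
  rw [Finset.sum_congr rfl fun x _ => Finset.sum_comm, Finset.sum_comm]

lemma ent_W' :
    ent p W
      = -∑ t : α × β × γ, lawOf p (fun ω => (X ω, Y ω, W ω)) t *
          Real.logb 2 (lawOf p W t.2.2) := by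
  unfold ent H2
  congr 1
  simp only [Fintype.sum_prod_type]
  rw [sum_comm3]
  refine Finset.sum_congr rfl fun w _ => ?_
  rw [law_W p X Y W w]
  simp only [Finset.sum_mul]

lemma ent_XYW :
    ent p (fun ω => (X ω, Y ω, W ω))
      = -∑ t : α × β × γ, lawOf p (fun ω => (X ω, Y ω, W ω)) t *
          Real.logb 2 (lawOf p (fun ω => (X ω, Y ω, W ω)) t) := rfl

lemma cmi_eq :
    cmi p X Y W = ∑ t : α × β × γ,
      lawOf p (fun ω => (X ω, Y ω, W ω)) t *
        (Real.logb 2 (lawOf p (fun ω => (X ω, Y ω, W ω)) t)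
          + Real.logb 2 (lawOf p W t.2.2)
          - Real.logb 2 (lawOf p (fun ω => (X ω, W ω)) (t.1, t.2.2))
          - Real.logb 2 (lawOf p (fun ω => (Y ω, W ω)) (t.2.1, t.2.2))) := by
  unfold cmi
  rw [ent_XW p X Y W, ent_YW p X Y W, ent_W' p X Y W, ent_XYW p X Y W]
  rw [show ∀ (a b c d : ℝ), -a + -b - -c - -d = (c + d) - a - b from by intros; ring]
  rw [← Finset.sum_add_distrib, ← Finset.sum_sub_distrib, ← Finset.sum_sub_distrib]
  refine Finset.sum_congr rfl fun t _ => by ring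

end Aux2

section Aux3
set_option linter.unusedSectionVars false
variable {Ω α β γ : Type} [Fintype Ω] [Fintype α] [Fintype β] [Fintype γ]
  [DecidableEq α] [DecidableEq β] [DecidableEq γ]
variable (p : Ω → ℝ) (X : Ω → α) (Y : Ω → β) (W : Ω → γ)

private lemma key_ineq {a c d e b' : ℝ} (ha : 0 ≤ a) (hac : a ≤ c) (had : a ≤ d)
    (hae : a ≤ e) (hc : 0 ≤ c) (hd : 0 ≤ d) (he : 0 ≤ e)
    (hb' : b' = if e = 0 then 0 else c * d / e) :
    a * (Real.log c + Real.log d - Real.log a - Real.log e) ≤ b' - a := by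
  rcases eq_or_lt_of_le ha with h0 | h0
  · rw [← h0]
    simp only [zero_mul, sub_zero]
    rw [hb']
    split
    · norm_num
    · positivity
  · have hc' : 0 < c := lt_of_lt_of_le h0 hac
    have hd' : 0 < d := lt_of_lt_of_le h0 had
    have he' : 0 < e := lt_of_lt_of_le h0 hae
    have hb : b' = c * d / e := by rw [hb', if_neg (ne_of_gt he')]
    have hbpos : 0 < b' := by rw [hb]; positivity
    have hlogeq : Real.log c + Real.log d - Real.log a - Real.log e
        = Real.log (b' / a) := by
      rw [hb, Real.log_div (by positivity) (ne_of_gt h0),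
        Real.log_div (by positivity) (ne_of_gt he'),
        Real.log_mul (ne_of_gt hc') (ne_of_gt hd')]
      ring
    rw [hlogeq]
    have hle := Real.log_le_sub_one_of_pos (show 0 < b' / a by positivity)
    calc a * Real.log (b' / a) ≤ a * (b' / a - 1) := by nlinarith
      _ = b' - a := by field_simp

lemma sum_law3_eq (hp : ∀ ω, 0 ≤ p ω) :
    ∑ t : α × β × γ, lawOf p (fun ω => (X ω, Y ω, W ω)) t = ∑ w, lawOf p W w := by
  simp only [Fintype.sum_prod_type]
  rw [sum_comm3]
  exact Finset.sum_congr rfl fun w _ => (law_W p X Y W w).symm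

lemma cmi_nonneg (hp : ∀ ω, 0 ≤ p ω) : 0 ≤ cmi p X Y W := by
  classical
  rw [cmi_eq p X Y W]
  have hl : ∀ t : α × β × γ, 0 ≤ lawOf p (fun ω => (X ω, Y ω, W ω)) t :=
    fun t => lawOf_nonneg hp _ t
  have hXW : ∀ x w, 0 ≤ lawOf p (fun ω => (X ω, W ω)) (x, w) :=
    fun x w => lawOf_nonneg hp _ _
  have hYW : ∀ y w, 0 ≤ lawOf p (fun ω => (Y ω, W ω)) (y, w) :=
    fun y w => lawOf_nonneg hp _ _
  have hW : ∀ w, 0 ≤ lawOf p W w := fun w => lawOf_nonneg hp _ _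
  have hmac : ∀ t : α × β × γ,
      lawOf p (fun ω => (X ω, Y ω, W ω)) t
        ≤ lawOf p (fun ω => (X ω, W ω)) (t.1, t.2.2) := by
    intro t
    rw [law_XW p X Y W]
    exact Finset.single_le_sum (fun y _ => hl (t.1, y, t.2.2)) (Finset.mem_univ t.2.1)
  have hmad : ∀ t : α × β × γ,
      lawOf p (fun ω => (X ω, Y ω, W ω)) t
        ≤ lawOf p (fun ω => (Y ω, W ω)) (t.2.1, t.2.2) := by
    intro t
    rw [law_YW p X Y W]
    exact Finset.single_le_sum (fun x _ => hl (x, t.2.1, t.2.2)) (Finset.mem_univ t.1)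
  have hmae : ∀ t : α × β × γ,
      lawOf p (fun ω => (X ω, Y ω, W ω)) t ≤ lawOf p W t.2.2 := by
    intro t
    rw [law_W p X Y W]
    calc lawOf p (fun ω => (X ω, Y ω, W ω)) t
        ≤ ∑ y, lawOf p (fun ω => (X ω, Y ω, W ω)) (t.1, y, t.2.2) :=
          Finset.single_le_sum (fun y _ => hl (t.1, y, t.2.2)) (Finset.mem_univ t.2.1)
      _ ≤ ∑ x, ∑ y, lawOf p (fun ω => (X ω, Y ω, W ω)) (x, y, t.2.2) :=
          Finset.single_le_sum
            (fun x _ => Finset.sum_nonneg fun y _ => hl (x, y, t.2.2))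
            (Finset.mem_univ t.1)
  have hlog2 : (0:ℝ) < Real.log 2 := Real.log_pos one_lt_two
  set B : α × β × γ → ℝ := fun t =>
    if lawOf p W t.2.2 = 0 then 0
    else lawOf p (fun ω => (X ω, W ω)) (t.1, t.2.2) *
      lawOf p (fun ω => (Y ω, W ω)) (t.2.1, t.2.2) / lawOf p W t.2.2 with hB
  have hsumB : ∑ t : α × β × γ, B t = ∑ w, lawOf p W w := by
    simp only [hB, Fintype.sum_prod_type]
    rw [sum_comm3]
    refine Finset.sum_congr rfl fun w _ => ?_
    by_cases hw : lawOf p W w = 0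
    · simp [hw]
    · simp only [hw, if_neg, ite_false]
      have inner : ∀ x, (∑ y, lawOf p (fun ω => (X ω, W ω)) (x, w) *
            lawOf p (fun ω => (Y ω, W ω)) (y, w) / lawOf p W w)
          = lawOf p (fun ω => (X ω, W ω)) (x, w) *
            (∑ y, lawOf p (fun ω => (Y ω, W ω)) (y, w)) / lawOf p W w := by
        intro x
        rw [← Finset.sum_div, ← Finset.mul_sum]
      rw [Finset.sum_congr rfl fun x _ => inner x, ← law_W2 p Y W w,
        ← Finset.sum_div, ← Finset.sum_mul, ← law_W1 p X W w]
      field_simp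
  have hsuml := sum_law3_eq p X Y W hp
  have hkey : ∀ t : α × β × γ,
      (lawOf p (fun ω => (X ω, Y ω, W ω)) t - B t) / Real.log 2
        ≤ lawOf p (fun ω => (X ω, Y ω, W ω)) t *
            (Real.logb 2 (lawOf p (fun ω => (X ω, Y ω, W ω)) t)
              + Real.logb 2 (lawOf p W t.2.2)
              - Real.logb 2 (lawOf p (fun ω => (X ω, W ω)) (t.1, t.2.2))
              - Real.logb 2 (lawOf p (fun ω => (Y ω, W ω)) (t.2.1, t.2.2))) := by
    intro t
    have h := key_ineq (hl t) (hmac t) (hmad t) (hmae t) (hXW t.1 t.2.2)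
      (hYW t.2.1 t.2.2) (hW t.2.2) (show B t = _ by simp only [hB])
    have h2 : lawOf p (fun ω => (X ω, Y ω, W ω)) t - B t
        ≤ lawOf p (fun ω => (X ω, Y ω, W ω)) t *
          (Real.log (lawOf p (fun ω => (X ω, Y ω, W ω)) t)
            + Real.log (lawOf p W t.2.2)
            - Real.log (lawOf p (fun ω => (X ω, W ω)) (t.1, t.2.2))
            - Real.log (lawOf p (fun ω => (Y ω, W ω)) (t.2.1, t.2.2))) := by
      nlinarith [h]
    calc (lawOf p (fun ω => (X ω, Y ω, W ω)) t - B t) / Real.log 2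
        ≤ (lawOf p (fun ω => (X ω, Y ω, W ω)) t *
          (Real.log (lawOf p (fun ω => (X ω, Y ω, W ω)) t)
            + Real.log (lawOf p W t.2.2)
            - Real.log (lawOf p (fun ω => (X ω, W ω)) (t.1, t.2.2))
            - Real.log (lawOf p (fun ω => (Y ω, W ω)) (t.2.1, t.2.2)))) / Real.log 2 := by
          gcongr
      _ = _ := by
          simp only [Real.logb]
          ring
  calc (0:ℝ)
      = (∑ t : α × β × γ, (lawOf p (fun ω => (X ω, Y ω, W ω)) t - B t)) / Real.log 2 := by
        rw [Finset.sum_sub_distrib, hsuml, hsumB]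
        simp
    _ = ∑ t : α × β × γ,
          (lawOf p (fun ω => (X ω, Y ω, W ω)) t - B t) / Real.log 2 := by
        rw [Finset.sum_div]
    _ ≤ _ := Finset.sum_le_sum fun t _ => hkey t

end Aux3

section Aux4
set_option linter.unusedSectionVars false
variable {Ω α β γ : Type} [Fintype Ω] [Fintype α] [Fintype β] [Fintype γ]
  [DecidableEq α] [DecidableEq β] [DecidableEq γ]
variable (p : Ω → ℝ) (X : Ω → α) (Y : Ω → β) (W : Ω → γ)

lemma cmi_eq_zero (hp : ∀ ω, 0 ≤ p ω) (h : CondIndep p X Y W) :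
    cmi p X Y W = 0 := by
  rw [cmi_eq p X Y W]
  refine Finset.sum_eq_zero fun t _ => ?_
  obtain ⟨x, y, w⟩ := t
  dsimp only
  have hl : (0:ℝ) ≤ lawOf p (fun ω => (X ω, Y ω, W ω)) (x, y, w) :=
    lawOf_nonneg hp _ _
  rcases eq_or_lt_of_le hl with h0 | h0
  · rw [← h0, zero_mul]
  · have hmae : lawOf p (fun ω => (X ω, Y ω, W ω)) (x, y, w) ≤ lawOf p W w := by
      rw [law_W p X Y W]
      calc lawOf p (fun ω => (X ω, Y ω, W ω)) (x, y, w)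
          ≤ ∑ y', lawOf p (fun ω => (X ω, Y ω, W ω)) (x, y', w) :=
            Finset.single_le_sum
              (fun y' _ => lawOf_nonneg hp (fun ω => (X ω, Y ω, W ω)) (x, y', w))
              (Finset.mem_univ y)
        _ ≤ ∑ x', ∑ y', lawOf p (fun ω => (X ω, Y ω, W ω)) (x', y', w) :=
            Finset.single_le_sum
              (fun x' _ => Finset.sum_nonneg fun y' _ =>
                lawOf_nonneg hp (fun ω => (X ω, Y ω, W ω)) (x', y', w))
              (Finset.mem_univ x)
    have he : 0 < lawOf p W w := lt_of_lt_of_le h0 hmae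
    have hprod : 0 < lawOf p (fun ω => (X ω, W ω)) (x, w) *
        lawOf p (fun ω => (Y ω, W ω)) (y, w) := by
      rw [← h x y w]; exact mul_pos h0 he
    have hc : 0 < lawOf p (fun ω => (X ω, W ω)) (x, w) := by
      rcases lt_or_eq_of_le (lawOf_nonneg hp (fun ω => (X ω, W ω)) (x, w)) with h' | h'
      · exact h'
      · rw [← h', zero_mul] at hprod; exact absurd hprod (lt_irrefl 0)
    have hd : 0 < lawOf p (fun ω => (Y ω, W ω)) (y, w) := by
      rcases lt_or_eq_of_le (lawOf_nonneg hp (fun ω => (Y ω, W ω)) (y, w)) with h' | h'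
      · exact h'
      · rw [← h', mul_zero] at hprod; exact absurd hprod (lt_irrefl 0)
    have hlogeq : Real.logb 2 (lawOf p (fun ω => (X ω, Y ω, W ω)) (x, y, w))
        + Real.logb 2 (lawOf p W w)
        = Real.logb 2 (lawOf p (fun ω => (X ω, W ω)) (x, w))
          + Real.logb 2 (lawOf p (fun ω => (Y ω, W ω)) (y, w)) := by
      rw [← Real.logb_mul (ne_of_gt h0) (ne_of_gt he),
        ← Real.logb_mul (ne_of_gt hc) (ne_of_gt hd), h x y w]
    have : Real.logb 2 (lawOf p (fun ω => (X ω, Y ω, W ω)) (x, y, w))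
        + Real.logb 2 (lawOf p W w)
        - Real.logb 2 (lawOf p (fun ω => (X ω, W ω)) (x, w))
        - Real.logb 2 (lawOf p (fun ω => (Y ω, W ω)) (y, w)) = 0 := by linarith
    rw [this, mul_zero]

lemma ent_swap (A : Ω → α) (B : Ω → β) :
    ent p (fun ω => (B ω, A ω)) = ent p (fun ω => (A ω, B ω)) :=
  ent_comp_inj p (fun ω => (A ω, B ω)) (fun s => (s.2, s.1))
    (fun s s' h => by
      have h' := Prod.ext_iff.mp h
      exact Prod.ext_iff.mpr ⟨h'.2, h'.1⟩)

lemma ent_swap2 (A : Ω → β) (B : Ω → γ) :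
    ent p (fun ω => (X ω, B ω, A ω)) = ent p (fun ω => (X ω, A ω, B ω)) :=
  ent_comp_inj p (fun ω => (X ω, A ω, B ω)) (fun s => (s.1, s.2.2, s.2.1))
    (fun s s' h => by
      have h1 := Prod.ext_iff.mp h
      have h2 := Prod.ext_iff.mp h1.2
      exact Prod.ext_iff.mpr ⟨h1.1, Prod.ext_iff.mpr ⟨h2.2, h2.1⟩⟩)

lemma mi_add_cmi (A : Ω → β) (B : Ω → γ) :
    mi p X A + cmi p X B A = mi p X B + cmi p X A B := by
  unfold mi cmi
  rw [ent_swap p A B, ent_swap2 p X A B]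
  ring

lemma mi_le_of_condIndep (hp : ∀ ω, 0 ≤ p ω) (A : Ω → β) (B : Ω → γ)
    (h : CondIndep p X B A) : mi p X B ≤ mi p X A := by
  have h0 := cmi_eq_zero p X B A hp h
  have h1 := cmi_nonneg p X A B hp
  have h2 := mi_add_cmi p X A B
  linarith

end Aux4

section Abstract
variable {A B C D E : Type} [Fintype A] [Fintype B] [Fintype C] [Fintype D] [Fintype E]

lemma markov_G1 (f : A → B → C → D → E → ℝ) (hf : ∀ x y z u v, 0 ≤ f x y z u v)
    (H1 : ∀ x y u v, (∑ z, f x y z u v) * (∑ x', ∑ y', ∑ z', f x' y' z' u v)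
        = (∑ y', ∑ z', f x y' z' u v) * (∑ x', ∑ z', f x' y z' u v))
    (H2 : ∀ x y z u v, f x y z u v * (∑ x', ∑ y', ∑ z', ∑ u', f x' y' z' u' v)
        = (∑ z', f x y z' u v) * (∑ x', ∑ y', ∑ u', f x' y' z u' v))
    (x : A) (y : B) (z : C) (u : D) (v : E) :
    f x y z u v * (∑ x', ∑ y', ∑ z', f x' y' z' u v)
      = (∑ y', ∑ z', f x y' z' u v) * (∑ x', f x' y z u v) := by
  by_cases hv : (∑ x', ∑ y', ∑ z', ∑ u', f x' y' z' u' v) = 0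
  · have h4 : ∀ x' y' z' u', f x' y' z' u' v = 0 := by
      intro x' y' z' u'
      have hle : f x' y' z' u' v ≤ ∑ x'', ∑ y'', ∑ z'', ∑ u'', f x'' y'' z'' u'' v := by
        calc f x' y' z' u' v
            ≤ ∑ u'', f x' y' z' u'' v :=
              Finset.single_le_sum (fun u'' _ => hf x' y' z' u'' v) (Finset.mem_univ u')
          _ ≤ ∑ z'', ∑ u'', f x' y' z'' u'' v :=
              Finset.single_le_sum
                (fun z'' _ => Finset.sum_nonneg fun u'' _ => hf x' y' z'' u'' v)
                (Finset.mem_univ z')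
          _ ≤ ∑ y'', ∑ z'', ∑ u'', f x' y'' z'' u'' v :=
              Finset.single_le_sum
                (fun y'' _ => Finset.sum_nonneg fun z'' _ =>
                  Finset.sum_nonneg fun u'' _ => hf x' y'' z'' u'' v)
                (Finset.mem_univ y')
          _ ≤ ∑ x'', ∑ y'', ∑ z'', ∑ u'', f x'' y'' z'' u'' v :=
              Finset.single_le_sum
                (fun x'' _ => Finset.sum_nonneg fun y'' _ => Finset.sum_nonneg fun z'' _ =>
                  Finset.sum_nonneg fun u'' _ => hf x'' y'' z'' u'' v)
                (Finset.mem_univ x')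
      have := hf x' y' z' u' v
      rw [hv] at hle
      linarith
    simp [h4]
  · have key1 := H2 x y z u v
    have key2 := H1 x y u v
    have key3 : (∑ x', f x' y z u v) * (∑ x', ∑ y', ∑ z', ∑ u', f x' y' z' u' v)
        = (∑ x', ∑ z', f x' y z' u v) * (∑ x', ∑ y', ∑ u', f x' y' z u' v) := by
      have h := Finset.sum_congr rfl (fun x' (_ : x' ∈ Finset.univ) => H2 x' y z u v)
      rw [← Finset.sum_mul, ← Finset.sum_mul] at h
      exact h
    refine mul_right_cancel₀ hv ?_
    linear_combination (∑ x', ∑ y', ∑ z', f x' y' z' u v) * key1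
      + (∑ x', ∑ y', ∑ u', f x' y' z u' v) * key2
      - (∑ y', ∑ z', f x y' z' u v) * key3

lemma markov_G2 (f : A → B → C → D → E → ℝ)
    (H2 : ∀ x y z u v, f x y z u v * (∑ x', ∑ y', ∑ z', ∑ u', f x' y' z' u' v)
        = (∑ z', f x y z' u v) * (∑ x', ∑ y', ∑ u', f x' y' z u' v))
    (x : A) (z : C) (v : E) :
    (∑ y, ∑ u, f x y z u v) * (∑ x', ∑ y', ∑ z', ∑ u', f x' y' z' u' v)
      = (∑ y', ∑ z', ∑ u', f x y' z' u' v) * (∑ x', ∑ y', ∑ u', f x' y' z u' v) := by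
  have h : ∀ y, (∑ u, f x y z u v) * (∑ x', ∑ y', ∑ z', ∑ u', f x' y' z' u' v)
      = (∑ u, ∑ z', f x y z' u v) * (∑ x', ∑ y', ∑ u', f x' y' z u' v) := by
    intro y
    have h0 := Finset.sum_congr rfl (fun u (_ : u ∈ Finset.univ) => H2 x y z u v)
    rw [← Finset.sum_mul, ← Finset.sum_mul] at h0
    exact h0
  have h1 := Finset.sum_congr rfl (fun y (_ : y ∈ Finset.univ) => h y)
  rw [← Finset.sum_mul, ← Finset.sum_mul] at h1
  rw [h1]
  congr 1
  exact Finset.sum_congr rfl fun y _ => Finset.sum_comm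

end Abstract

lemma mi_congr {Ω Ω' α β : Type} [Fintype Ω] [Fintype Ω'] [Fintype α] [Fintype β]
    [DecidableEq α] [DecidableEq β]
    (p : Ω → ℝ) (q : Ω' → ℝ) (X : Ω → α) (Y : Ω → β) (X' : Ω' → α) (Y' : Ω' → β)
    (hX : ∀ a, lawOf p X a = lawOf q X' a) (hY : ∀ b, lawOf p Y b = lawOf q Y' b)
    (hXY : ∀ c, lawOf p (fun ω => (X ω, Y ω)) c = lawOf q (fun ω => (X' ω, Y' ω)) c) :
    mi p X Y = mi q X' Y' := by
  unfold mi ent H2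
  simp only [hX, hY, hXY]


/-- **Minimum communication rates.**  For any pmf `P_{XYZUV}` on finite
alphabets satisfying the Markov chains `X − (U,V) − Y` and `(X,Y,U) − V − Z`,
one has `I(X;U,V) ≥ I(X;Y,Z)` and `I(X;V) ≥ I(X;Z)`.  Consequently the choice
`(U,V) = (Y,Z)` — the diagonal extension `q` of the target joint pmf `Q` —
satisfies both Markov chains, has `(X,Y,Z)`-marginal `Q`, and attains
`I(X;U,V) = I(X;Y,Z)` and `I(X;V) = I(X;Z)` simultaneously, so the minimum
rates over `D` are `R1 = I(X;Y,Z)` and `R2 = I(X;Z)`. -/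
theorem min_communication_rates
    {𝒳 𝒴 𝒵 : Type} [Fintype 𝒳] [Fintype 𝒴] [Fintype 𝒵]
    [DecidableEq 𝒳] [DecidableEq 𝒴] [DecidableEq 𝒵]
    (Q : 𝒳 × 𝒴 × 𝒵 → ℝ) (hQ : IsPmf Q) :
    (∀ (𝒰 𝒱 : Type) (_ : Fintype 𝒰) (_ : Fintype 𝒱)
        (_ : DecidableEq 𝒰) (_ : DecidableEq 𝒱)
        (p : 𝒳 × 𝒴 × 𝒵 × 𝒰 × 𝒱 → ℝ), IsPmf p →
      CondIndep p (fun w => w.1) (fun w => w.2.1)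
        (fun w => (w.2.2.2.1, w.2.2.2.2)) →
      CondIndep p (fun w => (w.1, w.2.1, w.2.2.2.1)) (fun w => w.2.2.1)
        (fun w => w.2.2.2.2) →
      mi p (fun w => w.1) (fun w => (w.2.1, w.2.2.1))
          ≤ mi p (fun w => w.1) (fun w => (w.2.2.2.1, w.2.2.2.2)) ∧
      mi p (fun w => w.1) (fun w => w.2.2.1)
          ≤ mi p (fun w => w.1) (fun w => w.2.2.2.2)) ∧
    (∀ q : 𝒳 × 𝒴 × 𝒵 × 𝒴 × 𝒵 → ℝ,
      (∀ w, q w = if w.2.2.2.1 = w.2.1 ∧ w.2.2.2.2 = w.2.2.1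
          then Q (w.1, w.2.1, w.2.2.1) else 0) →
      IsPmf q ∧
      (∀ x y z, lawOf q (fun w => (w.1, w.2.1, w.2.2.1)) (x, y, z) = Q (x, y, z)) ∧
      CondIndep q (fun w => w.1) (fun w => w.2.1)
        (fun w => (w.2.2.2.1, w.2.2.2.2)) ∧
      CondIndep q (fun w => (w.1, w.2.1, w.2.2.2.1)) (fun w => w.2.2.1)
        (fun w => w.2.2.2.2) ∧
      mi q (fun w => w.1) (fun w => (w.2.2.2.1, w.2.2.2.2))
        = mi Q (fun w => w.1) (fun w => (w.2.1, w.2.2)) ∧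
      mi q (fun w => w.1) (fun w => w.2.2.2.2)
        = mi Q (fun w => w.1) (fun w => w.2.2)) := by
  constructor
  · intro 𝒰 𝒱 _ _ _ _ p hpmf h1 h2
    have hp : ∀ w, 0 ≤ p w := hpmf.1
    have hf : ∀ (x : 𝒳) (y : 𝒴) (z : 𝒵) (u : 𝒰) (v : 𝒱), 0 ≤ p (x, y, z, u, v) :=
      fun x y z u v => hp _
    have H1 : ∀ (x : 𝒳) (y : 𝒴) (u : 𝒰) (v : 𝒱),
        (∑ z, p (x, y, z, u, v)) * (∑ x', ∑ y', ∑ z', p (x', y', z', u, v))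
          = (∑ y', ∑ z', p (x, y', z', u, v)) * (∑ x', ∑ z', p (x', y, z', u, v)) := by
      intro x y u v
      have h := h1 x y (u, v)
      simpa [lawOf, Fintype.sum_prod_type, Prod.ext_iff, ite_and,
        Finset.sum_ite_irrel, Finset.sum_ite_eq, Finset.sum_ite_eq',
        Finset.sum_const_zero] using h
    have H2 : ∀ (x : 𝒳) (y : 𝒴) (z : 𝒵) (u : 𝒰) (v : 𝒱),
        p (x, y, z, u, v) * (∑ x', ∑ y', ∑ z', ∑ u', p (x', y', z', u', v))
          = (∑ z', p (x, y, z', u, v)) * (∑ x', ∑ y', ∑ u', p (x', y', z, u', v)) := by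
      intro x y z u v
      have h := h2 (x, y, u) z v
      simpa [lawOf, Fintype.sum_prod_type, Prod.ext_iff, ite_and,
        Finset.sum_ite_irrel, Finset.sum_ite_eq, Finset.sum_ite_eq',
        Finset.sum_const_zero] using h
    constructor
    · refine mi_le_of_condIndep p (fun w => w.1) hp _ _ ?_
      rintro x ⟨y, z⟩ ⟨u, v⟩
      have h := markov_G1 (fun x y z u v => p (x, y, z, u, v)) hf H1 H2 x y z u v
      simpa [lawOf, Fintype.sum_prod_type, Prod.ext_iff, ite_and,
        Finset.sum_ite_irrel, Finset.sum_ite_eq, Finset.sum_ite_eq',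
        Finset.sum_const_zero] using h
    · refine mi_le_of_condIndep p (fun w => w.1) hp _ _ ?_
      rintro x z v
      have h := markov_G2 (fun x y z u v => p (x, y, z, u, v)) H2 x z v
      simpa [lawOf, Fintype.sum_prod_type, Prod.ext_iff, ite_and,
        Finset.sum_ite_irrel, Finset.sum_ite_eq, Finset.sum_ite_eq',
        Finset.sum_const_zero] using h
  · intro q hq
    have law_recipe : True := trivial
    refine ⟨⟨?_, ?_⟩, ?_, ?_, ?_, ?_, ?_⟩
    · intro w
      rw [hq w]
      split
      · exact hQ.1 _
      · exact le_rfl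
    · have h : ∑ w, q w = ∑ a : 𝒳 × 𝒴 × 𝒵, Q a := by
        simp only [hq, Fintype.sum_prod_type, ite_and, Finset.sum_ite_irrel,
          Finset.sum_ite_eq, Finset.sum_ite_eq', Finset.sum_const_zero,
          Finset.mem_univ, if_true]
        try dsimp only
        try simp [Finset.sum_ite_irrel, Finset.sum_ite_eq, Finset.sum_ite_eq',
          Finset.sum_const_zero]
      rw [h, hQ.2]
    · intro x y z
      simp only [lawOf, hq, Fintype.sum_prod_type, Prod.ext_iff, ite_and,
        Finset.sum_ite_irrel, Finset.sum_ite_eq, Finset.sum_ite_eq',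
        Finset.sum_const_zero, Finset.mem_univ, if_true]
      try dsimp only
      try simp [Finset.sum_ite_irrel, Finset.sum_ite_eq, Finset.sum_ite_eq',
        Finset.sum_const_zero]
    · rintro x y ⟨u, v⟩
      by_cases hu : u = y <;>
      · simp only [lawOf, hq, Fintype.sum_prod_type, Prod.ext_iff, ite_and,
          Finset.sum_ite_irrel, Finset.sum_ite_eq, Finset.sum_ite_eq',
          Finset.sum_const_zero, Finset.mem_univ, if_true]
        try dsimp only
        try simp [Finset.sum_ite_irrel, Finset.sum_ite_eq, Finset.sum_ite_eq',
          Finset.sum_const_zero, hu]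
    · rintro ⟨x, y, u⟩ z v
      by_cases hu : u = y <;> by_cases hv : v = z <;>
      · simp only [lawOf, hq, Fintype.sum_prod_type, Prod.ext_iff, ite_and,
          Finset.sum_ite_irrel, Finset.sum_ite_eq, Finset.sum_ite_eq',
          Finset.sum_const_zero, Finset.mem_univ, if_true]
        try dsimp only
        try simp [Finset.sum_ite_irrel, Finset.sum_ite_eq, Finset.sum_ite_eq',
          Finset.sum_const_zero, hu, hv]
    · have lX : ∀ a : 𝒳, lawOf q (fun w => w.1) a = lawOf Q (fun w => w.1) a := by
        intro a
        simp only [lawOf, hq, Fintype.sum_prod_type, Prod.ext_iff, ite_and,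
          Finset.sum_ite_irrel, Finset.sum_ite_eq, Finset.sum_ite_eq',
          Finset.sum_const_zero, Finset.mem_univ, if_true]
        try dsimp only
        try simp [Finset.sum_ite_irrel, Finset.sum_ite_eq, Finset.sum_ite_eq',
          Finset.sum_const_zero]
        symm
        rw [Fintype.sum_eq_single a]
        · simp
        · intro x hx
          simp [hx]
      have lUV : ∀ c : 𝒴 × 𝒵, lawOf q (fun w => (w.2.2.2.1, w.2.2.2.2)) c
          = lawOf Q (fun w => (w.2.1, w.2.2)) c := by
        rintro ⟨u, v⟩
        simp only [lawOf, hq, Fintype.sum_prod_type, Prod.ext_iff, ite_and,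
          Finset.sum_ite_irrel, Finset.sum_ite_eq, Finset.sum_ite_eq',
          Finset.sum_const_zero, Finset.mem_univ, if_true]
        try dsimp only
        try simp [Finset.sum_ite_irrel, Finset.sum_ite_eq, Finset.sum_ite_eq',
          Finset.sum_const_zero]
      have lXUV : ∀ c : 𝒳 × 𝒴 × 𝒵,
          lawOf q (fun w => (w.1, (w.2.2.2.1, w.2.2.2.2))) c
            = lawOf Q (fun w => (w.1, (w.2.1, w.2.2))) c := by
        rintro ⟨x, u, v⟩
        simp only [lawOf, hq, Fintype.sum_prod_type, Prod.ext_iff, ite_and,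
          Finset.sum_ite_irrel, Finset.sum_ite_eq, Finset.sum_ite_eq',
          Finset.sum_const_zero, Finset.mem_univ, if_true]
        try dsimp only
        try simp [Finset.sum_ite_irrel, Finset.sum_ite_eq, Finset.sum_ite_eq',
          Finset.sum_const_zero]
      exact mi_congr q Q _ _ _ _ lX lUV lXUV
    · have lX : ∀ a : 𝒳, lawOf q (fun w => w.1) a = lawOf Q (fun w => w.1) a := by
        intro a
        simp only [lawOf, hq, Fintype.sum_prod_type, Prod.ext_iff, ite_and,
          Finset.sum_ite_irrel, Finset.sum_ite_eq, Finset.sum_ite_eq',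
          Finset.sum_const_zero, Finset.mem_univ, if_true]
        try dsimp only
        try simp [Finset.sum_ite_irrel, Finset.sum_ite_eq, Finset.sum_ite_eq',
          Finset.sum_const_zero]
        symm
        rw [Fintype.sum_eq_single a]
        · simp
        · intro x hx
          simp [hx]
      have lV : ∀ c : 𝒵, lawOf q (fun w => w.2.2.2.2) c
          = lawOf Q (fun w => w.2.2) c := by
        intro c
        simp only [lawOf, hq, Fintype.sum_prod_type, Prod.ext_iff, ite_and,
          Finset.sum_ite_irrel, Finset.sum_ite_eq, Finset.sum_ite_eq',
          Finset.sum_const_zero, Finset.mem_univ, if_true]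
        try dsimp only
        try simp [Finset.sum_ite_irrel, Finset.sum_ite_eq, Finset.sum_ite_eq',
          Finset.sum_const_zero]
      have lXV : ∀ c : 𝒳 × 𝒵, lawOf q (fun w => (w.1, w.2.2.2.2)) c
          = lawOf Q (fun w => (w.1, w.2.2)) c := by
        rintro ⟨x, v⟩
        simp only [lawOf, hq, Fintype.sum_prod_type, Prod.ext_iff, ite_and,
          Finset.sum_ite_irrel, Finset.sum_ite_eq, Finset.sum_ite_eq',
          Finset.sum_const_zero, Finset.mem_univ, if_true]
        try dsimp only
        try simp [Finset.sum_ite_irrel, Finset.sum_ite_eq, Finset.sum_ite_eq',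
          Finset.sum_const_zero]
      exact mi_congr q Q _ _ _ _ lX lV lXV

end
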